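/- Let (Ω, μ) be a probability space, J ∈ [0, 1], m ≥ 1 an integer, and b : Fin m → ℕ with b(i) ≥ 1 for each i. For an integer b ≥ 1 write c_b = 1/2^b and P_b = c_b + (1 − c_b)·J. Let X : Fin m → Ω → ℝ be random variables such that each X(i) takes values in {0, 1}, E[X(i)] = P_{b(i)} for every i, and E[X(i)·X(j)] = P_{b(i)+b(j)} for every i ≠ j. Define the estimator Ĵ_m = (∑_{i} X(i)) / (∑_{i} (1 − c_{b(i)})) − (∑_{i} c_{b(i)}) / (∑_{i} (1 − c_{b(i)})). Then E[Ĵ_m] = J. -/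

import Mathlib

open MeasureTheory ProbabilityTheory

/-- Unbiasedness of the Pb-Hash estimator (Theorem 2): with `m` chunks of `b i` bits,
`c_b = 1/2^b`, collision indicators `X i` with `E[X i] = P_{b i} = c_{b i} + (1 − c_{b i})·J`
and `E[X i · X j] = P_{b i + b j}` for `i ≠ j`, the estimator
`Ĵ_m = (∑ X i)/(∑ (1 − c_{b i})) − (∑ c_{b i})/(∑ (1 − c_{b i}))` satisfies `E[Ĵ_m] = J`. -/
theorem pbHash_unbiased {Ω : Type*} [MeasurableSpace Ω]
    (μ : Measure Ω) [IsProbabilityMeasure μ]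
    (J : ℝ) (hJ : J ∈ Set.Icc (0 : ℝ) 1) (m : ℕ) (hm : 1 ≤ m)
    (b : Fin m → ℕ) (hb : ∀ i, 1 ≤ b i)
    (X : Fin m → Ω → ℝ) (hXmeas : ∀ i, Measurable (X i))
    (hX01 : ∀ i ω, X i ω = 0 ∨ X i ω = 1)
    (hXmean : ∀ i, ∫ ω, X i ω ∂μ = 1 / 2 ^ b i + (1 - 1 / 2 ^ b i) * J)
    (hXY : ∀ i j, i ≠ j →
      ∫ ω, X i ω * X j ω ∂μ = 1 / 2 ^ (b i + b j) + (1 - 1 / 2 ^ (b i + b j)) * J) :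
    ∫ ω, ((∑ i, X i ω) / (∑ i, (1 - 1 / (2 : ℝ) ^ b i))
        - (∑ i, 1 / (2 : ℝ) ^ b i) / (∑ i, (1 - 1 / (2 : ℝ) ^ b i))) ∂μ = J := by
  set S : ℝ := ∑ i, (1 - 1 / (2 : ℝ) ^ b i) with hS
  have hpos : ∀ i : Fin m, (0 : ℝ) < 1 - 1 / 2 ^ b i := by
    intro i
    have h2 : (2 : ℝ) ≤ 2 ^ b i := by
      calc (2 : ℝ) = 2 ^ 1 := (pow_one 2).symm
      _ ≤ 2 ^ b i := pow_le_pow_right₀ (by norm_num) (hb i)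
    have : (1 : ℝ) / 2 ^ b i ≤ 1 / 2 := by
      apply div_le_div_of_nonneg_left (by norm_num) (by norm_num) h2
    linarith
  have hSpos : 0 < S := by
    haveI : Nonempty (Fin m) := Fin.pos_iff_nonempty.mp hm
    exact Finset.sum_pos (fun i _ => hpos i) Finset.univ_nonempty
  have hint : ∀ i : Fin m, Integrable (X i) μ := by
    intro i
    apply (integrable_const (1 : ℝ)).mono' (hXmeas i).aestronglyMeasurable
    filter_upwards with ω
    rcases hX01 i ω with h | h <;> simp [h]
  have hintsum : Integrable (fun ω => ∑ i, X i ω) μ :=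
    integrable_finset_sum _ (fun i _ => hint i)
  have hIS : ∫ ω, (∑ i, X i ω) ∂μ = ∑ i, (1 / (2 : ℝ) ^ b i + (1 - 1 / 2 ^ b i) * J) := by
    rw [integral_finset_sum _ (fun i _ => hint i)]
    exact Finset.sum_congr rfl (fun i _ => hXmean i)
  rw [integral_sub (hintsum.div_const S) (integrable_const _), integral_div,
    integral_const, hIS]
  simp only [measure_univ, ENNReal.toReal_one, probReal_univ, smul_eq_mul, one_mul]
  rw [Finset.sum_add_distrib, ← Finset.sum_mul, ← hS, div_sub_div_same,
    add_sub_cancel_left, mul_div_cancel_left₀ J hSpos.ne']
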